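/- Let M ≥ 1, let A ∈ ℂ^{M×M} be Hermitian positive semidefinite with spectral decomposition A = U^H Λ U, where U is unitary and Λ = diag(λ_1, …, λ_M) with λ_1 ≤ λ_2 ≤ … ≤ λ_M (so λ_1 is the minimum eigenvalue). Let ρ > 0 and suppose the first row of U has no zero entry, i.e. U_{1k} ≠ 0 for all k. Then for every k ∈ {1,…,M}: 1/[(I + ρ A)^{-1}]_{kk} ≤ (1 + ρ λ_1) / |U_{1k}|², and consequently (1/M) ∑_{k=1}^M 1/[(I + ρ A)^{-1}]_{kk} ≤ (1 + ρ λ_1) · (1/M) ∑_{k=1}^M 1/|U_{1k}|². -/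

import Mathlib

open Matrix
open scoped ComplexOrder

/-- Let `A = Uᴴ Λ U` be Hermitian positive semidefinite, `U` unitary,
`Λ = diag(λ_1 ≤ … ≤ λ_M)` (here indexed by `Fin (m+1)`, with `lam` monotone so `lam 0` is
the minimum eigenvalue), `ρ > 0`, and suppose `U_{1k} ≠ 0` for all `k`.  Then for every `k`,
`1/[(I + ρ A)⁻¹]_{kk} ≤ (1 + ρ λ_1)/|U_{1k}|²`, and consequently
`(1/M) ∑ₖ 1/[(I + ρ A)⁻¹]_{kk} ≤ (1 + ρ λ_1) (1/M) ∑ₖ 1/|U_{1k}|²`. -/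
theorem stmt_4 (m : ℕ) (A : Matrix (Fin (m + 1)) (Fin (m + 1)) ℂ) (hA : A.PosSemidef)
    (U : Matrix (Fin (m + 1)) (Fin (m + 1)) ℂ) (hU : Uᴴ * U = 1 ∧ U * Uᴴ = 1)
    (lam : Fin (m + 1) → ℝ) (hmono : Monotone lam)
    (hdec : A = Uᴴ * Matrix.diagonal (fun ℓ => (lam ℓ : ℂ)) * U)
    (ρ : ℝ) (hρ : 0 < ρ) (hU0 : ∀ k, U 0 k ≠ 0) :
    (∀ k, 1 / ((((1 + (ρ : ℂ) • A)⁻¹ : Matrix (Fin (m + 1)) (Fin (m + 1)) ℂ) k k).re) ≤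
        (1 + ρ * lam 0) / ‖U 0 k‖ ^ 2) ∧
      (1 / (m + 1 : ℝ)) *
          ∑ k, 1 / ((((1 + (ρ : ℂ) • A)⁻¹ : Matrix (Fin (m + 1)) (Fin (m + 1)) ℂ) k k).re) ≤
        (1 + ρ * lam 0) * ((1 / (m + 1 : ℝ)) * ∑ k, 1 / ‖U 0 k‖ ^ 2) := by
  obtain ⟨hU1, hU2⟩ := hU
  -- eigenvalues are nonnegative
  have hDeq : Matrix.diagonal (fun ℓ => (lam ℓ : ℂ)) = U * A * Uᴴ := by
    symm
    calc U * A * Uᴴ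
        = (U * Uᴴ) * Matrix.diagonal (fun ℓ => (lam ℓ : ℂ)) * (U * Uᴴ) := by
          rw [hdec]; simp only [Matrix.mul_assoc]
      _ = _ := by rw [hU2]; simp
  have hDpsd : (Matrix.diagonal fun ℓ => (lam ℓ : ℂ)).PosSemidef :=
    hDeq ▸ hA.mul_mul_conjTranspose_same U
  have hlam : ∀ ℓ, 0 ≤ lam ℓ := by
    intro ℓ
    have := Matrix.posSemidef_diagonal_iff.mp hDpsd ℓ
    exact_mod_cast this
  have hd : ∀ ℓ, 0 < 1 + ρ * lam ℓ := fun ℓ => by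
    have h1 := mul_nonneg hρ.le (hlam ℓ); linarith
  -- conjugation identity
  have hconj : ∀ D D' : Matrix (Fin (m+1)) (Fin (m+1)) ℂ,
      (Uᴴ * D * U) * (Uᴴ * D' * U) = Uᴴ * (D * D') * U := by
    intro D D'
    calc (Uᴴ * D * U) * (Uᴴ * D' * U)
        = Uᴴ * (D * ((U * Uᴴ) * (D' * U))) := by simp only [Matrix.mul_assoc]
      _ = Uᴴ * (D * D') * U := by
          rw [hU2, Matrix.one_mul]; simp only [Matrix.mul_assoc]
  -- the matrix identity
  have h1 : (1 : Matrix (Fin (m+1)) (Fin (m+1)) ℂ) + (ρ : ℂ) • A =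
      Uᴴ * Matrix.diagonal (fun ℓ => ((1 + ρ * lam ℓ : ℝ) : ℂ)) * U := by
    have hdiag : Matrix.diagonal (fun ℓ => ((1 + ρ * lam ℓ : ℝ) : ℂ)) =
        1 + (ρ : ℂ) • Matrix.diagonal (fun ℓ => (lam ℓ : ℂ)) := by
      ext i j
      rcases eq_or_ne i j with h | h
      · subst h
        simp [Matrix.diagonal_apply_eq]
      · simp [Matrix.diagonal_apply_ne _ h, Matrix.one_apply_ne h]
    rw [hdiag, Matrix.mul_add, Matrix.add_mul, Matrix.mul_one, Matrix.mul_smul,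
      Matrix.smul_mul, hU1, hdec]
  -- the inverse
  have hinv : ((1 + (ρ : ℂ) • A)⁻¹ : Matrix (Fin (m + 1)) (Fin (m + 1)) ℂ) =
      Uᴴ * Matrix.diagonal (fun ℓ => (((1 + ρ * lam ℓ : ℝ)⁻¹ : ℝ) : ℂ)) * U := by
    apply Matrix.inv_eq_right_inv
    rw [h1, hconj, Matrix.diagonal_mul_diagonal]
    have : (fun ℓ => ((1 + ρ * lam ℓ : ℝ) : ℂ) * (((1 + ρ * lam ℓ : ℝ)⁻¹ : ℝ) : ℂ)) =
        fun _ => (1 : ℂ) := by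
      funext ℓ
      rw [← Complex.ofReal_mul, mul_inv_cancel₀ (hd ℓ).ne', Complex.ofReal_one]
    rw [this, Matrix.diagonal_one, Matrix.mul_one, hU1]
  -- diagonal entries
  have hentry : ∀ k, (((1 + (ρ : ℂ) • A)⁻¹ : Matrix (Fin (m + 1)) (Fin (m + 1)) ℂ) k k).re =
      ∑ ℓ, (1 + ρ * lam ℓ)⁻¹ * Complex.normSq (U ℓ k) := by
    intro k
    rw [hinv, Matrix.mul_assoc, Matrix.mul_apply]
    rw [Complex.re_sum]
    congr 1; funext ℓ
    rw [Matrix.diagonal_mul, Matrix.conjTranspose_apply]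
    have : star (U ℓ k) * ((((1 + ρ * lam ℓ : ℝ)⁻¹ : ℝ) : ℂ) * U ℓ k) =
        ((((1 + ρ * lam ℓ : ℝ)⁻¹ * Complex.normSq (U ℓ k) : ℝ)) : ℂ) := by
      push_cast
      rw [Complex.normSq_eq_conj_mul_self]
      simp only [Complex.star_def]
      ring
    rw [this, Complex.ofReal_re]
  -- per-entry lower bound on the diagonal of the inverse
  have hlow : ∀ k, (1 + ρ * lam 0)⁻¹ * Complex.normSq (U 0 k) ≤
      (((1 + (ρ : ℂ) • A)⁻¹ : Matrix (Fin (m + 1)) (Fin (m + 1)) ℂ) k k).re := by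
    intro k
    rw [hentry k]
    exact Finset.single_le_sum (f := fun ℓ => (1 + ρ * lam ℓ)⁻¹ * Complex.normSq (U ℓ k))
      (fun ℓ _ => mul_nonneg (inv_nonneg.mpr (hd ℓ).le) (Complex.normSq_nonneg _))
      (Finset.mem_univ 0)
  have hpos : ∀ k, 0 < (1 + ρ * lam 0)⁻¹ * Complex.normSq (U 0 k) := fun k =>
    mul_pos (inv_pos.mpr (hd 0)) (Complex.normSq_pos.mpr (hU0 k))
  have key : ∀ k, 1 / ((((1 + (ρ : ℂ) • A)⁻¹ : Matrix (Fin (m + 1)) (Fin (m + 1)) ℂ) k k).re) ≤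
      (1 + ρ * lam 0) / ‖U 0 k‖ ^ 2 := by
    intro k
    have h2 : 1 / ((((1 + (ρ : ℂ) • A)⁻¹ : Matrix (Fin (m + 1)) (Fin (m + 1)) ℂ) k k).re) ≤
        1 / ((1 + ρ * lam 0)⁻¹ * Complex.normSq (U 0 k)) :=
      one_div_le_one_div_of_le (hpos k) (hlow k)
    refine h2.trans_eq ?_
    rw [Complex.sq_norm, one_div, mul_inv, inv_inv, div_eq_mul_inv]
  refine ⟨key, ?_⟩
  have hsum : ∑ k, 1 / ((((1 + (ρ : ℂ) • A)⁻¹ : Matrix (Fin (m + 1)) (Fin (m + 1)) ℂ) k k).re) ≤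
      ∑ k, (1 + ρ * lam 0) / ‖U 0 k‖ ^ 2 :=
    Finset.sum_le_sum fun k _ => key k
  have hM : (0 : ℝ) ≤ 1 / (m + 1 : ℝ) := by positivity
  calc (1 / (m + 1 : ℝ)) *
        ∑ k, 1 / ((((1 + (ρ : ℂ) • A)⁻¹ : Matrix (Fin (m + 1)) (Fin (m + 1)) ℂ) k k).re)
      ≤ (1 / (m + 1 : ℝ)) * ∑ k, (1 + ρ * lam 0) / ‖U 0 k‖ ^ 2 :=
        mul_le_mul_of_nonneg_left hsum hM
    _ = (1 + ρ * lam 0) * ((1 / (m + 1 : ℝ)) * ∑ k, 1 / ‖U 0 k‖ ^ 2) := by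
        rw [Finset.mul_sum, Finset.mul_sum, Finset.mul_sum]
        congr 1; funext k; ring
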